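/- If U is a basically generated ultrafilter on ω, then U is strictly Tukey below ([𝔠]^{<ω}, ⊆): there is no unbounded map from ([𝔠]^{<ω}, ⊆) into (U, ⊇); equivalently, every subset of U of size continuum contains an infinite subfamily whose intersection lies in U. -/

import Mathlib

open Set

universe u v w

def CofinalSet {α : Type u} [PartialOrder α] (S : Set α) : Prop :=
  ∀ a : α, ∃ s ∈ S, a ≤ s

def CofinalMap {α : Type u} {β : Type v} [PartialOrder α] [PartialOrder β] (f : α → β) : Prop :=
  ∀ S : Set α, CofinalSet S → CofinalSet (f '' S)

def TukeyLE (α : Type u) (β : Type v) [PartialOrder α] [PartialOrder β] : Prop :=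
  ∃ f : β → α, CofinalMap f

def TukeyEquiv (α : Type u) (β : Type v) [PartialOrder α] [PartialOrder β] : Prop :=
  TukeyLE α β ∧ TukeyLE β α

def UnboundedSet {α : Type u} [PartialOrder α] (S : Set α) : Prop :=
  ∀ a : α, ∃ s ∈ S, ¬ s ≤ a

def UnboundedMap {α : Type u} {β : Type v} [PartialOrder α] [PartialOrder β] (g : α → β) : Prop :=
  ∀ S : Set α, UnboundedSet S → UnboundedSet (g '' S)

def UltOrd {α : Type u} (U : Ultrafilter α) : Type u := {X : Set α // X ∈ U}

instance {α : Type u} (U : Ultrafilter α) : PartialOrder (UltOrd U) where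
  le A B := B.1 ⊆ A.1
  le_refl _ := subset_rfl
  le_trans _ _ _ h1 h2 := Set.Subset.trans h2 h1
  le_antisymm _ _ h1 h2 := Subtype.ext (subset_antisymm h2 h1)

def Nonprincipal {α : Type u} (U : Ultrafilter α) : Prop := ∀ a : α, U ≠ pure a

/-- Convergence in the Cantor-space topology on `𝒫(ω)`. -/
def Converges (A : ℕ → Set ℕ) (L : Set ℕ) : Prop :=
  ∀ m : ℕ, ∃ k : ℕ, ∀ n ≥ k, ∀ i < m, (i ∈ A n ↔ i ∈ L)

def IsPPoint (U : Ultrafilter ℕ) : Prop :=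
  ∀ A : ℕ → Set ℕ, (∀ n, A n ∈ U) → ∃ X : Set ℕ, X ∈ U ∧ ∀ n, (X \ A n).Finite
def BasicallyGenerated (U : Ultrafilter ℕ) : Prop :=
  ∃ B : Set (Set ℕ), (∀ b ∈ B, b ∈ U) ∧ (∀ A : Set ℕ, A ∈ U → ∃ b ∈ B, b ⊆ A) ∧
    ∀ A : ℕ → Set ℕ, (∀ n, A n ∈ B) → ∀ L ∈ B, Converges A L →
      ∃ φ : ℕ → ℕ, StrictMono φ ∧ (⋂ k, A (φ k)) ∈ U

lemma isolated_countable (S : Set (Set ℕ)) :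
    {L | L ∈ S ∧ ∃ n, ∀ A ∈ S, (∀ i < n, (i ∈ A ↔ i ∈ L)) → A = L}.Countable := by
  classical
  set Iso := {L | L ∈ S ∧ ∃ n, ∀ A ∈ S, (∀ i < n, (i ∈ A ↔ i ∈ L)) → A = L} with hIso
  rw [← Set.countable_coe_iff]
  let f : ↥Iso → ℕ × Finset ℕ := fun L =>
    ⟨Classical.choose L.2.2, (Finset.range (Classical.choose L.2.2)).filter (· ∈ L.1)⟩
  have hinj : Function.Injective f := by
    intro L L' hLL
    have h1 : Classical.choose L.2.2 = Classical.choose L'.2.2 := congrArg Prod.fst hLL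
    have h2 := congrArg Prod.snd hLL
    simp only [f] at h2
    have hagree : ∀ i < Classical.choose L.2.2, (i ∈ L'.1 ↔ i ∈ L.1) := by
      intro i hi
      constructor
      · intro hmem
        have : i ∈ (Finset.range (Classical.choose L'.2.2)).filter (· ∈ L'.1) := by
          rw [Finset.mem_filter, Finset.mem_range]
          exact ⟨h1 ▸ hi, hmem⟩
        rw [← h2, Finset.mem_filter] at this
        exact this.2
      · intro hmem
        have : i ∈ (Finset.range (Classical.choose L.2.2)).filter (· ∈ L.1) := by
          rw [Finset.mem_filter, Finset.mem_range]
          exact ⟨hi, hmem⟩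
        rw [h2, Finset.mem_filter] at this
        exact this.2
    have := Classical.choose_spec L.2.2 L'.1 L'.2.1 hagree
    exact (Subtype.ext this).symm
  exact Function.Injective.countable hinj

lemma bg_key (U : Ultrafilter ℕ) (h : BasicallyGenerated U) (X : Set (Set ℕ))
    (hXU : ∀ A ∈ X, A ∈ U) (hX : ¬ X.Countable) :
    ∃ Y ⊆ X, Y.Infinite ∧ ⋂₀ Y ∈ U := by
  classical
  obtain ⟨B, hB1, hB2, hB3⟩ := h
  have hch : ∀ A, A ∈ X → ∃ b, b ∈ B ∧ b ⊆ A := fun A hA => by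
    obtain ⟨b, hb1, hb2⟩ := hB2 A (hXU A hA); exact ⟨b, hb1, hb2⟩
  choose! f hfB hfsub using hch
  by_cases hfib : ∃ v, {A | A ∈ X ∧ f A = v}.Infinite
  · obtain ⟨v, hv⟩ := hfib
    obtain ⟨A0, hA0⟩ := hv.nonempty
    refine ⟨{A | A ∈ X ∧ f A = v}, fun A hA => hA.1, hv, ?_⟩
    have hvB : v ∈ U := hB1 v (hA0.2 ▸ hfB A0 hA0.1)
    refine Filter.mem_of_superset hvB ?_
    intro x hx A hA
    exact hfsub A hA.1 (hA.2.symm ▸ hx)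
  · push_neg at hfib
    set S := f '' X with hS
    have hSB : ∀ v ∈ S, v ∈ B := by rintro v ⟨A, hA, rfl⟩; exact hfB A hA
    have hSunc : ¬ S.Countable := by
      intro hSc
      apply hX
      have hsub : X ⊆ ⋃ v ∈ S, {A | A ∈ X ∧ f A = v} := by
        intro A hA
        exact Set.mem_biUnion ⟨A, hA, rfl⟩ ⟨hA, rfl⟩
      exact (Set.Countable.biUnion hSc fun v _ =>
        (hfib v).countable).mono hsub
    have : ∃ L ∈ S, ∀ n, ∃ A ∈ S, (∀ i < n, (i ∈ A ↔ i ∈ L)) ∧ A ≠ L := by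
      by_contra hcon
      push_neg at hcon
      apply hSunc
      refine (isolated_countable S).mono ?_
      intro L hL
      refine ⟨hL, ?_⟩
      obtain ⟨n, hn⟩ := hcon L hL
      exact ⟨n, fun A hA hag => hn A hA hag⟩
    obtain ⟨L, hLS, hLnon⟩ := this
    choose A hAS hAag hAne using hLnon
    have hconv : Converges A L := by
      intro m
      exact ⟨m, fun n hn i hi => hAag n i (lt_of_lt_of_le hi hn)⟩
    obtain ⟨φ, hφ, hint⟩ := hB3 A (fun n => hSB _ (hAS n)) L (hSB _ hLS) hconv
    have hsec : ∀ v, v ∈ S → ∃ w, w ∈ X ∧ f w = v := by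
      rintro v ⟨w, hw, rfl⟩; exact ⟨w, hw, rfl⟩
    choose! s hsX hsf using hsec
    set R := Set.range (fun k => A (φ k)) with hR
    have hRS : R ⊆ S := by rintro v ⟨k, rfl⟩; exact hAS (φ k)
    have hRinf : R.Infinite := by
      intro hfin
      have huniv : (Set.univ : Set ℕ).Finite := by
        have : (Set.univ : Set ℕ) ⊆ ⋃ v ∈ R, {k | A (φ k) = v} := by
          intro k _
          exact Set.mem_biUnion ⟨k, rfl⟩ rfl
        refine Set.Finite.subset (Set.Finite.biUnion hfin fun v hv => ?_) this
        obtain ⟨k0, hk0⟩ := hv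
        have hvL : v ≠ L := hk0 ▸ hAne (φ k0)
        have : ∃ i, ¬ (i ∈ v ↔ i ∈ L) := by
          by_contra hc
          push_neg at hc
          exact hvL (Set.ext fun i => (hc i))
        obtain ⟨i, hi⟩ := this
        refine Set.Finite.subset (Set.finite_Iic i) ?_
        intro k hk
        simp only [Set.mem_setOf_eq] at hk
        by_contra hki
        rw [Set.mem_Iic, not_le] at hki
        have hiφ : i < φ k := lt_of_lt_of_le hki (hφ.le_apply)
        exact hi (hk ▸ hAag (φ k) i hiφ)
      exact Set.infinite_univ huniv
    refine ⟨s '' R, ?_, ?_, ?_⟩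
    · rintro w ⟨v, hv, rfl⟩; exact hsX v (hRS hv)
    · refine hRinf.image ?_
      intro v hv v' hv' hvv
      have := congrArg f hvv
      rwa [hsf v (hRS hv), hsf v' (hRS hv')] at this
    · refine Filter.mem_of_superset hint ?_
      intro x hx w hw
      obtain ⟨v, hv, rfl⟩ := hw
      obtain ⟨k, hk⟩ := hv
      have hxv : x ∈ v := hk ▸ Set.mem_iInter.mp hx k
      exact hfsub (s v) (hsX v (hRS ⟨k, hk⟩)) ((hsf v (hRS ⟨k, hk⟩)).symm ▸ hxv)

/-- A basically generated ultrafilter is strictly Tukey below `[𝔠]^{<ω}`. -/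
theorem basicallyGenerated_below_top (U : Ultrafilter ℕ) (h : BasicallyGenerated U) :
    (¬ ∃ g : Finset (Set ℕ) → UltOrd U, UnboundedMap g) ∧
    ∀ X : Set (Set ℕ), (∀ A ∈ X, A ∈ U) → Cardinal.mk ↥X = Cardinal.continuum →
      ∃ Y ⊆ X, Y.Infinite ∧ ⋂₀ Y ∈ U := by
  classical
  constructor
  · rintro ⟨g, hg⟩
    set h' : Set ℕ → Set ℕ := fun α => (g {α}).1 with hh'
    have claim : ∀ I : Set (Set ℕ), I.Infinite → (⋂ α ∈ I, h' α) ∉ U := by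
      intro I hI hmem
      have hunb : UnboundedSet ((fun α : Set ℕ => ({α} : Finset (Set ℕ))) '' I) := by
        intro F
        obtain ⟨α, hαI, hαF⟩ := hI.exists_notMem_finset F
        refine ⟨{α}, ⟨α, hαI, rfl⟩, ?_⟩
        intro hle
        exact hαF (hle (Finset.mem_singleton_self α))
      obtain ⟨t, ⟨F, ⟨α, hαI, rfl⟩, rfl⟩, ht⟩ := hg _ hunb ⟨_, hmem⟩
      exact ht (Set.biInter_subset_of_mem hαI)
    have hfib : ∀ v, {α | h' α = v}.Finite := by
      intro v
      by_contra hinf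
      have hinf : {α | h' α = v}.Infinite := hinf
      obtain ⟨α0, hα0⟩ := hinf.nonempty
      apply claim _ hinf
      have heq : (⋂ α ∈ {α | h' α = v}, h' α) = v := by
        apply subset_antisymm
        · have := Set.biInter_subset_of_mem (s := {α | h' α = v}) (t := h') hα0
          rwa [hα0] at this
        · intro x hx
          rw [Set.mem_iInter₂]
          intro α hα
          rw [Set.mem_setOf_eq] at hα
          rw [hα]
          exact hx
      rw [heq]
      rw [← hα0]
      exact (g {α0}).2
    have hrU : ¬ (Set.range h').Countable := by
      intro hc
      have hcu : (Set.univ : Set (Set ℕ)).Countable := by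
        have hsub : (Set.univ : Set (Set ℕ)) ⊆ ⋃ v ∈ Set.range h', {α | h' α = v} :=
          fun α _ => Set.mem_biUnion (Set.mem_range_self α) rfl
        exact ((hc.biUnion fun v _ => (hfib v).countable)).mono hsub
      haveI := Set.countable_univ_iff.mp hcu
      have h1 : (Cardinal.mk (Set ℕ)) ≤ Cardinal.aleph0 := Cardinal.mk_le_aleph0
      rw [Cardinal.mk_set, Cardinal.mk_nat] at h1
      have h2 : Cardinal.aleph0 < (2 : Cardinal) ^ Cardinal.aleph0 := by
        rw [Cardinal.two_power_aleph0]; exact Cardinal.aleph0_lt_continuum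
      exact absurd h1 (not_le.mpr h2)
    obtain ⟨Y, hYX, hYinf, hYU⟩ := bg_key U h (Set.range h')
      (by rintro A ⟨α, rfl⟩; exact (g {α}).2) hrU
    have hsec : ∀ v, v ∈ Y → ∃ α, h' α = v := fun v hv => hYX hv
    choose! sec hsec' using hsec
    have hIinf : (sec '' Y).Infinite := by
      refine hYinf.image ?_
      intro v hv v' hv' hvv
      have := congrArg h' hvv
      rwa [hsec' v hv, hsec' v' hv'] at this
    apply claim _ hIinf
    refine Filter.mem_of_superset hYU ?_
    intro x hx
    rw [Set.mem_iInter₂]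
    rintro α ⟨v, hv, rfl⟩
    rw [hsec' v hv]
    exact hx v hv
  · intro X hXU hcard
    refine bg_key U h X hXU ?_
    intro hc
    have := Cardinal.le_aleph0_iff_set_countable.mpr hc
    rw [hcard] at this
    exact absurd this (not_le.mpr Cardinal.aleph0_lt_continuum)
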